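/- For every natural number n and every element x of a commutative ring, Σ_{k=0}^{n} C(n,k)·C(n+k,k)·(−x)^k = (−1)^n · Σ_{k=0}^{n} C(n,k)·C(n+k,k)·(x−1)^k. -/

import Mathlib

open Finset

lemma vand (n k : ℕ) :
    (n + k).choose k = ∑ j ∈ range (k + 1), n.choose j * k.choose j := by
  rw [Nat.add_choose_eq, Finset.Nat.sum_antidiagonal_eq_sum_range_succ_mk]
  refine Finset.sum_congr rfl fun j hj => ?_
  simp only [mem_range] at hj
  rw [Nat.choose_symm (by omega : j ≤ k)]

lemma inner {R : Type*} [CommRing R] (n j : ℕ) (hj : j ≤ n) (x : R) :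
    ∑ k ∈ range (n + 1), (n.choose k : R) * (k.choose j : R) * (-x) ^ k
      = (n.choose j : R) * (-x) ^ j * (1 - x) ^ (n - j) := by
  rw [range_eq_Ico, ← Finset.sum_Ico_consecutive _ (Nat.zero_le j) (by omega : j ≤ n + 1)]
  have h0 : ∑ k ∈ Ico 0 j, (n.choose k : R) * (k.choose j : R) * (-x) ^ k = 0 := by
    apply Finset.sum_eq_zero
    intro k hk
    simp only [mem_Ico] at hk
    rw [Nat.choose_eq_zero_of_lt hk.2]
    simp
  rw [h0, zero_add, Finset.sum_Ico_eq_sum_range]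
  have hrange : n + 1 - j = n - j + 1 := by omega
  rw [hrange]
  have hpow : (1 - x) ^ (n - j) = ∑ i ∈ range (n - j + 1), (-x) ^ i * ((n - j).choose i : R) := by
    have h := add_pow (-x) 1 (n - j)
    simp only [one_pow, mul_one] at h
    rw [show (1 : R) - x = -x + 1 by ring, h]
  rw [hpow, Finset.mul_sum]
  refine Finset.sum_congr rfl fun i hi => ?_
  simp only [mem_range] at hi
  have hc : n.choose (j + i) * (j + i).choose j = n.choose j * (n - j).choose i := by
    rw [Nat.choose_mul (by omega)]
    congr 2
    omega
  have hcR : ((n.choose (j + i)) : R) * ((j + i).choose j : R) = (n.choose j : R) * ((n - j).choose i : R) := by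
    exact_mod_cast congrArg (Nat.cast (R := R)) hc
  rw [pow_add, ← mul_assoc, hcR]
  ring

lemma key {R : Type*} [CommRing R] (n : ℕ) (x : R) :
    ∑ k ∈ range (n + 1), (n.choose k : R) * ((n + k).choose k : R) * (-x) ^ k
      = ∑ j ∈ range (n + 1), (n.choose j : R) ^ 2 * (-x) ^ j * (1 - x) ^ (n - j) := by
  have step1 : ∀ k ∈ range (n + 1),
      (n.choose k : R) * ((n + k).choose k : R) * (-x) ^ k
        = ∑ j ∈ range (n + 1), (n.choose j : R) * ((n.choose k : R) * (k.choose j : R) * (-x) ^ k) := by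
    intro k hk
    simp only [mem_range] at hk
    rw [vand n k]
    push_cast
    simp only [Finset.mul_sum, Finset.sum_mul]
    rw [← Finset.sum_range_add_sum_Ico _ (by omega : k + 1 ≤ n + 1)]
    have hz : ∑ j ∈ Ico (k + 1) (n + 1), (n.choose j : R) * ((n.choose k : R) * (k.choose j : R) * (-x) ^ k) = 0 := by
      apply Finset.sum_eq_zero
      intro j hj
      simp only [mem_Ico] at hj
      rw [Nat.choose_eq_zero_of_lt hj.1]
      simp
    rw [hz, add_zero]
    refine Finset.sum_congr rfl fun j hj => ?_
    ring
  rw [Finset.sum_congr rfl step1, Finset.sum_comm]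
  refine Finset.sum_congr rfl fun j hj => ?_
  simp only [mem_range] at hj
  rw [← Finset.mul_sum, inner n j (by omega) x]
  ring

theorem stmt2 {R : Type*} [CommRing R] (n : ℕ) (x : R) :
    ∑ k ∈ Finset.range (n + 1), (n.choose k : R) * ((n + k).choose k : R) * (-x) ^ k =
      (-1) ^ n * ∑ k ∈ Finset.range (n + 1),
        (n.choose k : R) * ((n + k).choose k : R) * (x - 1) ^ k := by
  have h1 := key n x
  have h2 := key n (1 - x)
  simp only [show -(1 - x) = x - 1 by ring, show (1 : R) - (1 - x) = x by ring] at h2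
  rw [h1, h2, Finset.mul_sum]
  refine Eq.trans ?_ (Finset.sum_range_reflect
    (fun j => (-1 : R) ^ n * ((n.choose j : R) ^ 2 * (x - 1) ^ j * x ^ (n - j))) (n + 1))
  refine Finset.sum_congr rfl fun j hj => ?_
  simp only [mem_range] at hj
  simp only [Nat.add_sub_cancel]
  rw [Nat.choose_symm (by omega : j ≤ n), show n - (n - j) = j by omega]
  have hs : ((-1 : R)) ^ n = (-1) ^ j * (-1) ^ (n - j) := by
    rw [← pow_add]; congr 1; omega
  have hx : ((-1 : R)) ^ (n - j) * (x - 1) ^ (n - j) = (1 - x) ^ (n - j) := by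
    rw [← mul_pow]; congr 1; ring
  have hx2 : ((-1 : R)) ^ j * x ^ j = (-x) ^ j := by
    rw [← mul_pow]; congr 1; ring
  rw [hs]
  calc (n.choose j : R) ^ 2 * (-x) ^ j * (1 - x) ^ (n - j)
      = (n.choose j : R) ^ 2 * ((-1:R)^j * x ^ j) * ((-1:R)^(n-j) * (x - 1) ^ (n - j)) := by
        rw [hx2, hx]
    _ = (-1:R) ^ j * (-1:R) ^ (n - j) * ((n.choose j : R) ^ 2 * (x - 1) ^ (n - j) * x ^ j) := by
        ring
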